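/- arXiv:1907.01479 — 2 statements merged into one kernel-verified Lean document; each statement's English description precedes it below -/
import Mathlib

section
/- Every real-valued signal x ∈ Π[N] admits the tight-frame expansion x[k] = (1/2) Σ_{μ=0}^{1} Σ_{l=0}^{N/2−1} ( y^μ[l]·ψ_μ[k−2l] + c^μ[l]·φ_μ[k−2l] ), where y^μ[l] = ⟨x, ψ_μ[·−2l]⟩ and c^μ[l] = ⟨x, φ_μ[·−2l]⟩; i.e. the combined system of two-sample shifts of ψ0, ψ1, φ0, φ1 forms a tight frame of Π[N] with frame constant 2. -/
open Finset

noncomputable def omegaN (N : ℕ) : ℂ := Complex.exp (2 * Real.pi * Complex.I / N)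

noncomputable def U4r (N r : ℕ) (n : ℤ) : ℝ :=
  ((Real.cos (Real.pi * n / N)) ^ (4 * r) + (Real.sin (Real.pi * n / N)) ^ (4 * r)) / 2

noncomputable def betaF (N r : ℕ) (n : ℤ) : ℂ :=
  Complex.ofReal ((Real.cos (Real.pi * n / N)) ^ (2 * r) / Real.sqrt (U4r N r n))

noncomputable def alphaF (N r : ℕ) (n : ℤ) : ℂ :=
  omegaN N ^ n * Complex.ofReal ((Real.sin (Real.pi * n / N)) ^ (2 * r) / Real.sqrt (U4r N r n))

noncomputable def psi0 (N r : ℕ) (k : ℤ) : ℂ :=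
  (N : ℂ)⁻¹ * ∑ n ∈ Finset.range N, omegaN N ^ (k * (n : ℤ)) * betaF N r n

noncomputable def psi1 (N r : ℕ) (k : ℤ) : ℂ :=
  (N : ℂ)⁻¹ * ∑ n ∈ Finset.range N, omegaN N ^ (k * (n : ℤ)) * alphaF N r n

noncomputable def ip (N : ℕ) (x y : ℤ → ℂ) : ℂ :=
  ∑ k ∈ Finset.range N, x k * (starRingEnd ℂ) (y k)

/-- DFT of the first-level complementary wavelet packet φ₀. -/
noncomputable def phi0hat (N r : ℕ) (n : ℕ) : ℂ :=
  if n = 0 then (Real.sqrt 2 : ℂ)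
  else if 2 * n = N then 0
  else if 2 * n < N then -Complex.I * betaF N r n
  else Complex.I * betaF N r n

/-- DFT of the first-level complementary wavelet packet φ₁. -/
noncomputable def phi1hat (N r : ℕ) (n : ℕ) : ℂ :=
  if n = 0 then 0
  else if 2 * n = N then -(Real.sqrt 2 : ℂ)
  else if 2 * n < N then -Complex.I * alphaF N r n
  else Complex.I * alphaF N r n

/-- The first-level complementary wavelet packets φ₀, φ₁, via the inverse DFT. -/
noncomputable def phiW (N r : ℕ) (μ : Fin 2) (k : ℤ) : ℂ :=
  (N : ℂ)⁻¹ * ∑ n ∈ Finset.range N,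
    omegaN N ^ (k * (n : ℤ)) * (if μ.val = 0 then phi0hat N r n else phi1hat N r n)

/-- The first-level discrete-spline wavelet packets ψ₀, ψ₁ indexed by μ : Fin 2. -/
noncomputable def psiW (N r : ℕ) (μ : Fin 2) (k : ℤ) : ℂ :=
  if μ.val = 0 then psi0 N r k else psi1 N r k

/- ===== auxiliary definitions and lemmas ===== -/

noncomputable def bR (N r : ℕ) (n : ℤ) : ℝ :=
  (Real.cos (Real.pi * n / N)) ^ (2 * r) / Real.sqrt (U4r N r n)
noncomputable def aR (N r : ℕ) (n : ℤ) : ℝ :=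
  (Real.sin (Real.pi * n / N)) ^ (2 * r) / Real.sqrt (U4r N r n)
noncomputable def gF (N : ℕ) (Fh : ℕ → ℂ) (k : ℤ) : ℂ :=
  (N : ℂ)⁻¹ * ∑ n ∈ Finset.range N, omegaN N ^ (k * (n : ℤ)) * Fh n

lemma omegaN_prim (N : ℕ) (h : N ≠ 0) : IsPrimitiveRoot (omegaN N) N :=
  Complex.isPrimitiveRoot_exp N h

lemma omegaN_ne_zero (N : ℕ) : omegaN N ≠ 0 := Complex.exp_ne_zero _

lemma conj_omegaN_zpow (N : ℕ) (a : ℤ) :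
    (starRingEnd ℂ) (omegaN N ^ a) = omegaN N ^ (-a) := by
  have h1 : (starRingEnd ℂ) (omegaN N) = (omegaN N)⁻¹ := by
    rw [omegaN, ← Complex.exp_conj, ← Complex.exp_neg]
    congr 1
    simp [map_div₀, Complex.conj_I, map_ofNat]
    ring
  rw [map_zpow₀, h1, inv_zpow, ← zpow_neg]

lemma geom_root (P : ℕ) (hP : P ≠ 0) (ζ : ℂ) (hζ : IsPrimitiveRoot ζ P) (d : ℤ) :
    ∑ l ∈ range P, ζ ^ (d * (l : ℤ)) = if (P : ℤ) ∣ d then (P : ℂ) else 0 := by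
  have key : ∀ l : ℕ, ζ ^ (d * (l:ℤ)) = (ζ ^ d) ^ l := by
    intro l; rw [zpow_mul, zpow_natCast]
  simp only [key]
  by_cases h : (P : ℤ) ∣ d
  · rw [if_pos h]
    have : ζ ^ d = 1 := (hζ.zpow_eq_one_iff_dvd d).2 h
    simp [this]
  · rw [if_neg h]
    have hne : ζ ^ d ≠ 1 := fun hh => h ((hζ.zpow_eq_one_iff_dvd d).1 hh)
    rw [geom_sum_eq hne]
    have : (ζ ^ d) ^ P = 1 := by
      rw [← zpow_natCast (ζ ^ d), ← zpow_mul, mul_comm, zpow_mul, zpow_natCast,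
        hζ.pow_eq_one, one_zpow]
    rw [this]; simp

lemma U4r_pos (N r : ℕ) (hr : 1 ≤ r) (n : ℤ) : 0 < U4r N r n := by
  set c := Real.cos (Real.pi * n / N)
  set s := Real.sin (Real.pi * n / N)
  have hcs : s ^ 2 + c ^ 2 = 1 := Real.sin_sq_add_cos_sq _
  have h4 : 4 * r ≠ 0 := by omega
  have hc : 0 ≤ c ^ (4 * r) := Even.pow_nonneg ⟨2*r, by ring⟩ c
  have hs : 0 ≤ s ^ (4 * r) := Even.pow_nonneg ⟨2*r, by ring⟩ s
  rcases eq_or_lt_of_le hc with hc0 | hc0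
  · have hcz : c = 0 := by
      have := pow_eq_zero_iff h4 |>.1 hc0.symm
      exact this
    have hsz : s ^ 2 = 1 := by rw [hcz] at hcs; simpa using hcs
    have : s ^ (4*r) = 1 := by
      have : (s^2)^(2*r) = 1 := by rw [hsz]; simp
      rw [← pow_mul] at this; convert this using 2; ring
    rw [U4r]; positivity
  · rw [U4r]; positivity

lemma bR_aR_sq (N r : ℕ) (hr : 1 ≤ r) (n : ℤ) : bR N r n ^ 2 + aR N r n ^ 2 = 2 := by
  have hU := U4r_pos N r hr n
  have hs : Real.sqrt (U4r N r n) ^ 2 = U4r N r n := Real.sq_sqrt hU.le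
  rw [bR, aR, div_pow, div_pow, hs, ← pow_mul, ← pow_mul, ← add_div,
    show 2*r*2 = 4*r by ring]
  rw [U4r]
  rw [div_eq_iff (by rw [U4r] at hU; exact hU.ne')]
  ring

lemma angle_shift (N M : ℕ) (hNM : N = 2 * M) (hM : M ≠ 0) (n : ℤ) :
    Real.pi * ((n : ℝ) + (M : ℝ)) / N = Real.pi * n / N + Real.pi / 2 := by
  have hN : (N : ℝ) = 2 * M := by exact_mod_cast congrArg (Nat.cast : ℕ → ℝ) hNM
  have hM' : (M : ℝ) ≠ 0 := Nat.cast_ne_zero.2 hM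
  field_simp [hN]
  linear_combination -hN

lemma cos_shift (N M : ℕ) (hNM : N = 2 * M) (hM : M ≠ 0) (n : ℤ) :
    Real.cos (Real.pi * ((n + M : ℤ)) / N) = -Real.sin (Real.pi * n / N) := by
  push_cast
  rw [angle_shift N M hNM hM n, Real.cos_add_pi_div_two]

lemma sin_shift (N M : ℕ) (hNM : N = 2 * M) (hM : M ≠ 0) (n : ℤ) :
    Real.sin (Real.pi * ((n + M : ℤ)) / N) = Real.cos (Real.pi * n / N) := by
  push_cast
  rw [angle_shift N M hNM hM n, Real.sin_add_pi_div_two]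

lemma U4r_shift (N M r : ℕ) (hNM : N = 2 * M) (hM : M ≠ 0) (n : ℤ) :
    U4r N r (n + M) = U4r N r n := by
  rw [U4r, U4r, cos_shift N M hNM hM n, sin_shift N M hNM hM n,
    Even.neg_pow ⟨2*r, by ring⟩, add_comm]

lemma bR_shift (N M r : ℕ) (hNM : N = 2 * M) (hM : M ≠ 0) (n : ℤ) :
    bR N r (n + M) = aR N r n := by
  rw [bR, aR, cos_shift N M hNM hM n, U4r_shift N M r hNM hM n,
    Even.neg_pow ⟨r, by ring⟩]

lemma aR_shift (N M r : ℕ) (hNM : N = 2 * M) (hM : M ≠ 0) (n : ℤ) :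
    aR N r (n + M) = bR N r n := by
  rw [aR, bR, sin_shift N M hNM hM n, U4r_shift N M r hNM hM n]

lemma omegaN_half (N M : ℕ) (hNM : N = 2 * M) (hM : M ≠ 0) :
    omegaN N ^ (M : ℤ) = -1 := by
  rw [zpow_natCast, omegaN, ← Complex.exp_nat_mul]
  rw [← Complex.exp_pi_mul_I]
  congr 1
  have hM' : (M : ℂ) ≠ 0 := Nat.cast_ne_zero.2 hM
  have hN : (N : ℂ) = 2 * M := by exact_mod_cast congrArg (Nat.cast : ℕ → ℂ) hNM
  field_simp [hN]
  linear_combination -hN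

lemma omegaN_sq (N M : ℕ) (hNM : N = 2 * M) (hM : M ≠ 0) :
    omegaN N ^ (2 : ℤ) = omegaN M := by
  rw [show (2:ℤ) = ((2:ℕ):ℤ) by norm_num, zpow_natCast, omegaN, omegaN, ← Complex.exp_nat_mul]
  congr 1
  have hM' : (M : ℂ) ≠ 0 := Nat.cast_ne_zero.2 hM
  have hN : (N : ℂ) = 2 * M := by exact_mod_cast congrArg (Nat.cast : ℕ → ℂ) hNM
  field_simp [hN]
  linear_combination -hN

lemma betaF_eq (N r : ℕ) (n : ℤ) : betaF N r n = Complex.ofReal (bR N r n) := rfl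
lemma alphaF_eq (N r : ℕ) (n : ℤ) :
    alphaF N r n = omegaN N ^ n * Complex.ofReal (aR N r n) := rfl

lemma psi_diag (N r : ℕ) (hr : 1 ≤ r) (n : ℤ) :
    (starRingEnd ℂ) (betaF N r n) * betaF N r n
      + (starRingEnd ℂ) (alphaF N r n) * alphaF N r n = 2 := by
  rw [betaF_eq, alphaF_eq, Complex.conj_ofReal, map_mul, Complex.conj_ofReal,
    conj_omegaN_zpow]
  have h : omegaN N ^ (-n) * Complex.ofReal (aR N r n) * (omegaN N ^ n * Complex.ofReal (aR N r n))
      = (omegaN N ^ (-n) * omegaN N ^ n) * (Complex.ofReal (aR N r n) * Complex.ofReal (aR N r n)) := by ring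
  rw [h, ← zpow_add₀ (omegaN_ne_zero N), neg_add_cancel, zpow_zero, one_mul]
  rw [← Complex.ofReal_mul, ← Complex.ofReal_mul, ← Complex.ofReal_add]
  have := bR_aR_sq N r hr n
  rw [pow_two, pow_two] at this
  exact_mod_cast this

lemma psi_cross (N M r : ℕ) (hNM : N = 2 * M) (hM : M ≠ 0) (m : ℤ) :
    (starRingEnd ℂ) (betaF N r (m + M)) * betaF N r m
      + (starRingEnd ℂ) (alphaF N r (m + M)) * alphaF N r m = 0 := by
  rw [betaF_eq, betaF_eq, alphaF_eq, alphaF_eq, Complex.conj_ofReal, map_mul,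
    Complex.conj_ofReal, conj_omegaN_zpow, bR_shift N M r hNM hM, aR_shift N M r hNM hM]
  have h : omegaN N ^ (-(m + (M:ℤ))) * Complex.ofReal (bR N r m) * (omegaN N ^ m * Complex.ofReal (aR N r m))
      = (omegaN N ^ (-(m + (M:ℤ))) * omegaN N ^ m) * (Complex.ofReal (bR N r m) * Complex.ofReal (aR N r m)) := by ring
  rw [h, ← zpow_add₀ (omegaN_ne_zero N)]
  have he : -(m + (M:ℤ)) + m = -(M:ℤ) := by ring
  rw [he, zpow_neg, omegaN_half N M hNM hM, inv_neg, inv_one]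
  ring

lemma sqrt2_sq : ((Real.sqrt 2 : ℂ)) * ((Real.sqrt 2 : ℂ)) = 2 := by
  rw [← Complex.ofReal_mul, Real.mul_self_sqrt (by norm_num : (0:ℝ) ≤ 2)]
  norm_num

lemma phi_diag (N r : ℕ) (hr : 1 ≤ r) (n : ℕ) :
    (starRingEnd ℂ) (phi0hat N r n) * phi0hat N r n
      + (starRingEnd ℂ) (phi1hat N r n) * phi1hat N r n = 2 := by
  by_cases h0 : n = 0
  · simp [phi0hat, phi1hat, h0, Complex.conj_ofReal, sqrt2_sq]
  · by_cases h1 : 2 * n = N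
    · simp only [phi0hat, phi1hat, if_neg h0, if_pos h1]
      rw [map_neg, Complex.conj_ofReal]
      simp [sqrt2_sq]
    · have key : ∀ z w : ℂ, (starRingEnd ℂ) (-Complex.I * z) * (-Complex.I * w)
          = (starRingEnd ℂ) z * w := by
        intro z w
        rw [map_mul, map_neg, Complex.conj_I]
        ring_nf
        rw [Complex.I_sq]; ring
      have key2 : ∀ z w : ℂ, (starRingEnd ℂ) (Complex.I * z) * (Complex.I * w)
          = (starRingEnd ℂ) z * w := by
        intro z w
        rw [map_mul, Complex.conj_I]
        ring_nf
        rw [Complex.I_sq]; ring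
      by_cases h2 : 2 * n < N
      · simp only [phi0hat, phi1hat, if_neg h0, if_neg h1, if_pos h2]
        rw [key, key]
        exact psi_diag N r hr n
      · simp only [phi0hat, phi1hat, if_neg h0, if_neg h1, if_neg h2]
        rw [key2, key2]
        exact psi_diag N r hr n

lemma phi_cross (N M r : ℕ) (hNM : N = 2 * M) (hM : M ≠ 0) (hr : 1 ≤ r)
    (m : ℕ) (hm : m < M) :
    (starRingEnd ℂ) (phi0hat N r (m + M)) * phi0hat N r m
      + (starRingEnd ℂ) (phi1hat N r (m + M)) * phi1hat N r m = 0 := by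
  by_cases h0 : m = 0
  · subst h0
    have hMne : (0 + M : ℕ) ≠ 0 := by simpa using hM
    have hMN : 2 * (0 + M) = N := by omega
    simp only [phi0hat, phi1hat, if_neg hMne, if_pos hMN, if_pos rfl]
    simp
  · have hmM : m + M ≠ 0 := by omega
    have h2 : 2 * (m + M) ≠ N := by omega
    have h3 : ¬ (2 * (m + M) < N) := by omega
    have h4 : 2 * m ≠ N := by omega
    have h5 : 2 * m < N := by omega
    simp only [phi0hat, phi1hat, if_neg h0, if_neg hmM, if_pos, if_neg h2, if_neg h3,
      if_neg h4, if_pos h5]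
    have key3 : ∀ z w : ℂ, (starRingEnd ℂ) (Complex.I * z) * (-Complex.I * w)
        = -((starRingEnd ℂ) z * w) := by
      intro z w
      rw [map_mul, Complex.conj_I]
      ring_nf
      rw [Complex.I_sq]; ring
    rw [key3, key3, ← neg_add]
    have := psi_cross N M r hNM hM (m : ℤ)
    push_cast at this ⊢
    rw [this]
    simp

lemma key_lemma (N M r : ℕ) (hNM : N = 2 * M) (hM : M ≠ 0) (hr : 1 ≤ r)
    (n m : ℕ) (hn : n < N) (hm : m < N) (hdvd : (M : ℤ) ∣ (n : ℤ) - m) :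
    (starRingEnd ℂ) (betaF N r n) * betaF N r m
      + (starRingEnd ℂ) (alphaF N r n) * alphaF N r m
      + ((starRingEnd ℂ) (phi0hat N r n) * phi0hat N r m
      + (starRingEnd ℂ) (phi1hat N r n) * phi1hat N r m)
      = if n = m then 4 else 0 := by
  have hMpos : (0:ℤ) < M := by exact_mod_cast Nat.pos_of_ne_zero hM
  have tri : n = m ∨ (n = m + M ∧ m < M) ∨ (m = n + M ∧ n < M) := by
    rcases hdvd with ⟨c, hc⟩
    have hub : c ≤ 1 := by nlinarith
    have hlb : -1 ≤ c := by nlinarith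
    interval_cases c <;> omega
  have conjswap : ∀ A B : ℂ, (starRingEnd ℂ) A * B
      = (starRingEnd ℂ) ((starRingEnd ℂ) B * A) := by
    intro A B; rw [map_mul, Complex.conj_conj]; ring
  rcases tri with h | ⟨h, hmM⟩ | ⟨h, hnM⟩
  · subst h
    rw [if_pos rfl, psi_diag N r hr, phi_diag N r hr]
    norm_num
  · have hne : n ≠ m := by omega
    rw [if_neg hne]
    have hcast : ((n:ℕ):ℤ) = (m:ℤ) + (M:ℤ) := by push_cast [h]; ring
    rw [hcast, h]
    rw [psi_cross N M r hNM hM m, phi_cross N M r hNM hM hr m hmM]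
    norm_num
  · have hne : n ≠ m := by omega
    rw [if_neg hne]
    rw [conjswap (betaF N r n), conjswap (alphaF N r n), conjswap (phi0hat N r n),
      conjswap (phi1hat N r n), ← map_add, ← map_add, ← map_add]
    have hcast : ((m:ℕ):ℤ) = ((n:ℤ) + (M:ℤ)) := by push_cast [h]; ring
    rw [hcast, h]
    rw [psi_cross N M r hNM hM n, phi_cross N M r hNM hM hr n hnM]
    norm_num

lemma conj_gF (N : ℕ) (Fh : ℕ → ℂ) (s : ℤ) :
    (starRingEnd ℂ) (gF N Fh s)
      = (N : ℂ)⁻¹ * ∑ n ∈ Finset.range N, omegaN N ^ (-(s * (n : ℤ))) * (starRingEnd ℂ) (Fh n) := by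
  rw [gF, map_mul, map_sum]
  congr 1
  · simp
  · exact Finset.sum_congr rfl fun n _ => by rw [map_mul, conj_omegaN_zpow]

lemma sum_l_geom (N M : ℕ) (hNM : N = 2 * M) (hM : M ≠ 0) (d : ℤ) :
    ∑ l ∈ range M, omegaN N ^ (2 * d * (l : ℤ)) = if (M : ℤ) ∣ d then (M : ℂ) else 0 := by
  have h : ∀ l : ℕ, omegaN N ^ (2 * d * (l : ℤ)) = omegaN M ^ (d * (l : ℤ)) := by
    intro l
    rw [← omegaN_sq N M hNM hM, ← zpow_mul]
    congr 1
    ring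
  simp only [h]
  exact geom_root M hM _ (omegaN_prim M hM) d

lemma shift_sum (N M : ℕ) (hNM : N = 2 * M) (hM : M ≠ 0) (x : ℤ → ℂ) (k : ℤ) (Fh : ℕ → ℂ) :
    ∑ l ∈ range M, (ip N x (fun t => gF N Fh (t - 2 * (l : ℤ))) * gF N Fh (k - 2 * (l : ℤ)))
    = ∑ t ∈ range N, ∑ n ∈ range N, ∑ m ∈ range N,
        (if (M : ℤ) ∣ ((n : ℤ) - (m : ℤ)) then ((N:ℂ)⁻¹ * (N:ℂ)⁻¹ * (M:ℂ)) else 0) *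
          (x t * (starRingEnd ℂ) (Fh n) * Fh m * omegaN N ^ (k * (m : ℤ) - (t : ℤ) * (n : ℤ))) := by
  have hω := omegaN_ne_zero N
  have step1 : ∀ l : ℕ,
      ip N x (fun t => gF N Fh (t - 2 * (l : ℤ))) * gF N Fh (k - 2 * (l : ℤ))
      = ∑ m ∈ range N, ∑ t ∈ range N, ∑ n ∈ range N,
          ((N:ℂ)⁻¹ * (N:ℂ)⁻¹ * (x t * (starRingEnd ℂ) (Fh n) * Fh m
            * omegaN N ^ (k * (m : ℤ) - (t : ℤ) * (n : ℤ))))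
          * omegaN N ^ (2 * ((n : ℤ) - (m : ℤ)) * (l : ℤ)) := by
    intro l
    rw [ip, gF]
    simp only [conj_gF, Finset.mul_sum, Finset.sum_mul]
    refine Finset.sum_congr rfl fun m _ => ?_
    refine Finset.sum_congr rfl fun t _ => ?_
    refine Finset.sum_congr rfl fun n _ => ?_
    rw [show -(((t:ℤ) - 2*(l:ℤ)) * (n:ℤ)) = -((t:ℤ)*(n:ℤ)) + 2*(l:ℤ)*(n:ℤ) from by ring,
      show (k - 2*(l:ℤ)) * (m:ℤ) = k*(m:ℤ) + -(2*(l:ℤ)*(m:ℤ)) from by ring,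
      show k * (m:ℤ) - (t:ℤ)*(n:ℤ) = k*(m:ℤ) + -((t:ℤ)*(n:ℤ)) from by ring,
      show 2 * ((n:ℤ) - (m:ℤ)) * (l:ℤ) = 2*(l:ℤ)*(n:ℤ) + -(2*(l:ℤ)*(m:ℤ)) from by ring]
    simp only [zpow_add₀ hω]
    ring
  simp only [step1]
  rw [Finset.sum_comm]
  have step2 : ∀ m ∈ range N,
      (∑ l ∈ range M, ∑ t ∈ range N, ∑ n ∈ range N,
        ((N:ℂ)⁻¹ * (N:ℂ)⁻¹ * (x t * (starRingEnd ℂ) (Fh n) * Fh m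
            * omegaN N ^ (k * (m : ℤ) - (t : ℤ) * (n : ℤ))))
          * omegaN N ^ (2 * ((n : ℤ) - (m : ℤ)) * (l : ℤ)))
      = ∑ t ∈ range N, ∑ n ∈ range N,
          (if (M : ℤ) ∣ ((n : ℤ) - (m : ℤ)) then ((N:ℂ)⁻¹ * (N:ℂ)⁻¹ * (M:ℂ)) else 0) *
            (x t * (starRingEnd ℂ) (Fh n) * Fh m * omegaN N ^ (k * (m : ℤ) - (t : ℤ) * (n : ℤ))) := by
    intro m _
    rw [Finset.sum_comm]
    refine Finset.sum_congr rfl fun t _ => ?_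
    rw [Finset.sum_comm]
    refine Finset.sum_congr rfl fun n _ => ?_
    rw [← Finset.mul_sum, sum_l_geom N M hNM hM ((n:ℤ) - m)]
    by_cases h : (M : ℤ) ∣ ((n:ℤ) - m)
    · rw [if_pos h, if_pos h]; ring
    · rw [if_neg h, if_neg h]; ring
  rw [Finset.sum_congr rfl step2]
  rw [Finset.sum_comm]
  refine Finset.sum_congr rfl fun t _ => ?_
  rw [Finset.sum_comm]

lemma period_mul (N : ℕ) (x : ℤ → ℂ) (hper : ∀ k : ℤ, x (k + N) = x k) :
    ∀ (c : ℤ) (t : ℤ), x (t + c * N) = x t := by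
  intro c
  induction c using Int.induction_on with
  | zero => simp
  | succ c ih => intro t
                 have : t + (c + 1) * N = (t + c * N) + N := by ring
                 rw [this, hper, ih]
  | pred c ih => intro t
                 have h1 : t + (-c - 1) * N + N = t + (-c) * N := by ring
                 have := hper (t + (-c - 1) * N)
                 rw [h1] at this
                 rw [← this, ih]

lemma periodic_pick (N : ℕ) (hN : N ≠ 0) (x : ℤ → ℂ) (hper : ∀ k : ℤ, x (k + N) = x k)
    (k : ℤ) :
    ∑ t ∈ range N, x t * (if (N : ℤ) ∣ (k - t) then (N : ℂ) else 0) = (N : ℂ) * x k := by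
  have hNpos : (0 : ℤ) < N := by exact_mod_cast Nat.pos_of_ne_zero hN
  set t0 : ℕ := (k % N).toNat with ht0
  have ht0z : (t0 : ℤ) = k % N := Int.toNat_of_nonneg (Int.emod_nonneg k (by exact_mod_cast hN))
  have ht0lt : t0 < N := by
    have := Int.emod_lt_of_pos k hNpos
    omega
  have hx : x t0 = x k := by
    have h1 : k = (t0 : ℤ) + (k / N) * N := by
      rw [ht0z]
      have := Int.mul_ediv_add_emod k N
      linarith
    rw [← period_mul N x hper (k / N) (t0 : ℤ), ← h1]
  have hiff : ∀ t ∈ range N, ((N : ℤ) ∣ (k - t) ↔ t = t0) := by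
    intro t ht
    rw [mem_range] at ht
    constructor
    · intro hdvd
      have hmod : k % N = (t : ℤ) % N := Int.ModEq.symm (Int.modEq_iff_dvd.2 hdvd)
      have htmod : (t : ℤ) % N = t := Int.emod_eq_of_lt (by positivity) (by exact_mod_cast ht)
      omega
    · intro h
      subst h
      refine ⟨k / N, ?_⟩
      rw [ht0z]
      have := Int.mul_ediv_add_emod k N
      ring_nf
      linarith
  rw [Finset.sum_congr rfl (fun t ht => by
    rw [show (if (N : ℤ) ∣ (k - t) then (N : ℂ) else 0) = (if t = t0 then (N : ℂ) else 0) from by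
      by_cases h : t = t0
      · rw [if_pos ((hiff t ht).2 h), if_pos h]
      · rw [if_neg (fun hd => h ((hiff t ht).1 hd)), if_neg h]])]
  rw [Finset.sum_congr rfl (fun t _ => mul_ite (t = t0) (x t) (N:ℂ) 0)]
  simp only [mul_zero]
  rw [Finset.sum_ite_eq' (range N) t0 (fun t => x t * N)]
  rw [if_pos (mem_range.2 ht0lt), hx]
  ring

lemma grand (N M r : ℕ) (hNM : N = 2 * M) (hM : M ≠ 0) (hr : 1 ≤ r) (x : ℤ → ℂ)
    (hper : ∀ k : ℤ, x (k + N) = x k) (k : ℤ) :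
    ((∑ t ∈ range N, ∑ n ∈ range N, ∑ m ∈ range N,
        (if (M : ℤ) ∣ ((n : ℤ) - (m : ℤ)) then ((N:ℂ)⁻¹ * (N:ℂ)⁻¹ * (M:ℂ)) else 0) *
          (x t * (starRingEnd ℂ) (betaF N r n) * betaF N r m
            * omegaN N ^ (k * (m : ℤ) - (t : ℤ) * (n : ℤ))))
      + (∑ t ∈ range N, ∑ n ∈ range N, ∑ m ∈ range N,
        (if (M : ℤ) ∣ ((n : ℤ) - (m : ℤ)) then ((N:ℂ)⁻¹ * (N:ℂ)⁻¹ * (M:ℂ)) else 0) *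
          (x t * (starRingEnd ℂ) (phi0hat N r n) * phi0hat N r m
            * omegaN N ^ (k * (m : ℤ) - (t : ℤ) * (n : ℤ)))))
    + ((∑ t ∈ range N, ∑ n ∈ range N, ∑ m ∈ range N,
        (if (M : ℤ) ∣ ((n : ℤ) - (m : ℤ)) then ((N:ℂ)⁻¹ * (N:ℂ)⁻¹ * (M:ℂ)) else 0) *
          (x t * (starRingEnd ℂ) (alphaF N r n) * alphaF N r m
            * omegaN N ^ (k * (m : ℤ) - (t : ℤ) * (n : ℤ))))
      + (∑ t ∈ range N, ∑ n ∈ range N, ∑ m ∈ range N,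
        (if (M : ℤ) ∣ ((n : ℤ) - (m : ℤ)) then ((N:ℂ)⁻¹ * (N:ℂ)⁻¹ * (M:ℂ)) else 0) *
          (x t * (starRingEnd ℂ) (phi1hat N r n) * phi1hat N r m
            * omegaN N ^ (k * (m : ℤ) - (t : ℤ) * (n : ℤ)))))
    = (N:ℂ)⁻¹ * (M:ℂ) * 4 * x k := by
  have hN0 : N ≠ 0 := by omega
  have hNC : (N : ℂ) ≠ 0 := Nat.cast_ne_zero.2 hN0
  rw [← Finset.sum_add_distrib, ← Finset.sum_add_distrib, ← Finset.sum_add_distrib]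
  have step1 : ∀ t ∈ range N,
      ((∑ n ∈ range N, ∑ m ∈ range N,
        (if (M : ℤ) ∣ ((n : ℤ) - (m : ℤ)) then ((N:ℂ)⁻¹ * (N:ℂ)⁻¹ * (M:ℂ)) else 0) *
          (x t * (starRingEnd ℂ) (betaF N r n) * betaF N r m
            * omegaN N ^ (k * (m : ℤ) - (t : ℤ) * (n : ℤ))))
      + (∑ n ∈ range N, ∑ m ∈ range N,
        (if (M : ℤ) ∣ ((n : ℤ) - (m : ℤ)) then ((N:ℂ)⁻¹ * (N:ℂ)⁻¹ * (M:ℂ)) else 0) *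
          (x t * (starRingEnd ℂ) (phi0hat N r n) * phi0hat N r m
            * omegaN N ^ (k * (m : ℤ) - (t : ℤ) * (n : ℤ)))))
    + ((∑ n ∈ range N, ∑ m ∈ range N,
        (if (M : ℤ) ∣ ((n : ℤ) - (m : ℤ)) then ((N:ℂ)⁻¹ * (N:ℂ)⁻¹ * (M:ℂ)) else 0) *
          (x t * (starRingEnd ℂ) (alphaF N r n) * alphaF N r m
            * omegaN N ^ (k * (m : ℤ) - (t : ℤ) * (n : ℤ))))
      + (∑ n ∈ range N, ∑ m ∈ range N,
        (if (M : ℤ) ∣ ((n : ℤ) - (m : ℤ)) then ((N:ℂ)⁻¹ * (N:ℂ)⁻¹ * (M:ℂ)) else 0) *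
          (x t * (starRingEnd ℂ) (phi1hat N r n) * phi1hat N r m
            * omegaN N ^ (k * (m : ℤ) - (t : ℤ) * (n : ℤ)))))
      = ((N:ℂ)⁻¹ * (N:ℂ)⁻¹ * (M:ℂ) * 4 * x t)
          * (if (N : ℤ) ∣ (k - (t:ℤ)) then (N : ℂ) else 0) := by
    intro t _
    rw [← Finset.sum_add_distrib, ← Finset.sum_add_distrib, ← Finset.sum_add_distrib]
    calc _ = ∑ n ∈ range N, ∑ m ∈ range N,
          (if n = m then ((N:ℂ)⁻¹ * (N:ℂ)⁻¹ * (M:ℂ) * 4)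
              * (x t * omegaN N ^ (k * (m : ℤ) - (t : ℤ) * (m : ℤ))) else 0) := by
          refine Finset.sum_congr rfl fun n hn => ?_
          rw [← Finset.sum_add_distrib, ← Finset.sum_add_distrib, ← Finset.sum_add_distrib]
          refine Finset.sum_congr rfl fun m hm => ?_
          rw [mem_range] at hn hm
          by_cases hd : (M : ℤ) ∣ ((n : ℤ) - (m : ℤ))
          · have hk := key_lemma N M r hNM hM hr n m hn hm hd
            rw [if_pos hd]
            by_cases hnm : n = m
            · subst hnm
              rw [if_pos rfl]
              rw [if_pos rfl] at hk
              linear_combination (((N:ℂ)⁻¹ * (N:ℂ)⁻¹ * (M:ℂ)) * x t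
                * omegaN N ^ (k * (n : ℤ) - (t : ℤ) * (n : ℤ))) * hk
            · rw [if_neg hnm]
              rw [if_neg hnm] at hk
              linear_combination (((N:ℂ)⁻¹ * (N:ℂ)⁻¹ * (M:ℂ)) * x t
                * omegaN N ^ (k * (m : ℤ) - (t : ℤ) * (n : ℤ))) * hk
          · rw [if_neg hd]
            have hnm : n ≠ m := by
              rintro rfl
              exact hd (by simp)
            rw [if_neg hnm]
            ring
      _ = ∑ n ∈ range N,
            ((N:ℂ)⁻¹ * (N:ℂ)⁻¹ * (M:ℂ) * 4)
              * (x t * omegaN N ^ (k * (n : ℤ) - (t : ℤ) * (n : ℤ))) := by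
          refine Finset.sum_congr rfl fun n hn => ?_
          rw [Finset.sum_ite_eq (range N) n
            (fun m => ((N:ℂ)⁻¹ * (N:ℂ)⁻¹ * (M:ℂ) * 4)
              * (x t * omegaN N ^ (k * (m : ℤ) - (t : ℤ) * (m : ℤ)))), if_pos hn]
      _ = ((N:ℂ)⁻¹ * (N:ℂ)⁻¹ * (M:ℂ) * 4 * x t)
            * ∑ n ∈ range N, omegaN N ^ ((k - (t:ℤ)) * (n : ℤ)) := by
          rw [Finset.mul_sum]
          refine Finset.sum_congr rfl fun n _ => ?_
          rw [show k * (n : ℤ) - (t : ℤ) * (n : ℤ) = (k - (t:ℤ)) * (n:ℤ) from by ring]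
          ring
      _ = _ := by
          rw [geom_root N hN0 (omegaN N) (omegaN_prim N hN0) (k - (t:ℤ))]
  rw [Finset.sum_congr rfl step1]
  have : ∀ t ∈ range N,
      ((N:ℂ)⁻¹ * (N:ℂ)⁻¹ * (M:ℂ) * 4 * x t)
          * (if (N : ℤ) ∣ (k - (t:ℤ)) then (N : ℂ) else 0)
      = ((N:ℂ)⁻¹ * (N:ℂ)⁻¹ * (M:ℂ) * 4)
          * (x t * (if (N : ℤ) ∣ (k - (t:ℤ)) then (N : ℂ) else 0)) := by
    intro t _; ring
  rw [Finset.sum_congr rfl this, ← Finset.mul_sum, periodic_pick N hN0 x hper k]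
  field_simp

lemma psiW0_gF (N r : ℕ) : ∀ s : ℤ, psiW N r 0 s = gF N (fun n => betaF N r n) s := by
  intro s; rfl

lemma psiW1_gF (N r : ℕ) : ∀ s : ℤ, psiW N r 1 s = gF N (fun n => alphaF N r n) s := by
  intro s; rfl

lemma phiW0_gF (N r : ℕ) : ∀ s : ℤ, phiW N r 0 s = gF N (phi0hat N r) s := by
  intro s; rfl

lemma phiW1_gF (N r : ℕ) : ∀ s : ℤ, phiW N r 1 s = gF N (phi1hat N r) s := by
  intro s
  rw [phiW, gF]
  congr 1

/-- Every real-valued x ∈ Π[N] admits the tight-frame expansion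
x[k] = (1/2) Σ_{μ=0}^{1} Σ_{l=0}^{N/2−1} ( ⟨x,ψ_μ[·−2l]⟩ ψ_μ[k−2l] + ⟨x,φ_μ[·−2l]⟩ φ_μ[k−2l] ):
the two-sample shifts of ψ₀, ψ₁, φ₀, φ₁ form a tight frame of Π[N] with frame constant 2. -/
theorem stmt_12 (j r : ℕ) (hj : 3 ≤ j) (hr : 1 ≤ r) (N : ℕ) (hN : N = 2 ^ j)
    (x : ℤ → ℂ) (hper : ∀ k : ℤ, x (k + N) = x k) (hreal : ∀ k : ℤ, (x k).im = 0) :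
    ∀ k : ℤ,
      x k = (1 / 2 : ℂ) * ∑ μ : Fin 2, ∑ l ∈ Finset.range (N / 2),
        (ip N x (fun t => psiW N r μ (t - 2 * (l : ℤ))) * psiW N r μ (k - 2 * (l : ℤ)) +
         ip N x (fun t => phiW N r μ (t - 2 * (l : ℤ))) * phiW N r μ (k - 2 * (l : ℤ))) := by
  intro k
  obtain ⟨p, hp⟩ : ∃ p, j = p + 1 := ⟨j - 1, by omega⟩
  have hhalf : N / 2 = 2 ^ p := by
    rw [hN, hp, pow_succ, Nat.mul_div_cancel _ (by norm_num : 0 < 2)]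
  have hNM : N = 2 * (N / 2) := by
    rw [hhalf, hN, hp, pow_succ]; ring
  have hM : N / 2 ≠ 0 := by
    rw [hhalf]; positivity
  set M := N / 2 with hMdef
  rw [Fin.sum_univ_two]
  simp only [psiW0_gF N r, psiW1_gF N r, phiW0_gF N r, phiW1_gF N r]
  rw [Finset.sum_add_distrib, Finset.sum_add_distrib]
  rw [shift_sum N M hNM hM x k (fun n => betaF N r n),
      shift_sum N M hNM hM x k (phi0hat N r),
      shift_sum N M hNM hM x k (fun n => alphaF N r n),
      shift_sum N M hNM hM x k (phi1hat N r)]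
  rw [grand N M r hNM hM hr x hper k]
  have hMC : (M : ℂ) ≠ 0 := Nat.cast_ne_zero.2 hM
  have hNC : (N : ℂ) = 2 * M := by exact_mod_cast congrArg (Nat.cast : ℕ → ℂ) hNM
  rw [hNC]
  field_simp
  ring
end

section
/- The complementary-wavelet-packet construction commutes with the filtering recursion: let m ≥ 1 with 2^m dividing N, let ψ, ψ′ ∈ Π[N], and let h be an N/2^m-periodic filter such that ψ′[n] = Σ_{k=0}^{N/2^m−1} h[k]·ψ[n−2^m k] for all n. Define the operator 𝒦 on Π[N] by (𝒦x)^[n] = −i·x̂[n] for 0 < n < N/2, (𝒦x)^[n] = i·x̂[n] for N/2 < n < N, and (𝒦x)^[n] = x̂[n] for n ∈ {0, N/2}. Then 𝒦ψ′[n] = Σ_{k=0}^{N/2^m−1} h[k]·(𝒦ψ)[n−2^m k] for all n. -/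
open Finset

noncomputable def dft (N : ℕ) (x : ℤ → ℂ) (n : ℤ) : ℂ :=
  ∑ k ∈ Finset.range N, x k * omegaN N ^ (-((k : ℤ) * n))

/-- The operator 𝒦 on Π[N]: (𝒦x)^[n] = −i·x̂[n] for 0 < n < N/2, i·x̂[n] for N/2 < n < N,
and x̂[n] for n ∈ {0, N/2}; given here via the inverse DFT. -/
noncomputable def Kop (N : ℕ) (x : ℤ → ℂ) (k : ℤ) : ℂ :=
  (N : ℂ)⁻¹ * ∑ n ∈ Finset.range N,
    (if n = 0 ∨ 2 * n = N then 1 else if 2 * n < N then -Complex.I else Complex.I) *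
      dft N x n * omegaN N ^ (k * (n : ℤ))

lemma omegaN_zpow_N (N : ℕ) (hN : N ≠ 0) : omegaN N ^ (N : ℤ) = 1 := by
  have hNc : (N : ℂ) ≠ 0 := Nat.cast_ne_zero.mpr hN
  rw [zpow_natCast, omegaN, ← Complex.exp_nat_mul]
  rw [mul_div_assoc', mul_comm, mul_div_assoc, div_self hNc, mul_one]
  exact Complex.exp_two_pi_mul_I

lemma sum_shift_one (N : ℕ) (g : ℤ → ℂ) (hg : ∀ k : ℤ, g (k + N) = g k) :
    ∑ l ∈ range N, g ((l : ℤ) - 1) = ∑ l ∈ range N, g l := by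
  cases N with
  | zero => simp
  | succ M =>
    rw [Finset.sum_range_succ' (fun l => g ((l : ℤ) - 1)), Finset.sum_range_succ]
    congr 1
    · apply Finset.sum_congr rfl
      intro l _
      congr 1
      push_cast
      ring
    · have h0 : (((0:ℕ)):ℤ) - 1 = -1 := by simp
      rw [h0, ← hg (-1)]
      congr 1
      push_cast
      ring

lemma sum_shift (N : ℕ) (f : ℤ → ℂ) (hf : ∀ k : ℤ, f (k + N) = f k) (s : ℤ) :
    ∑ l ∈ range N, f ((l : ℤ) - s) = ∑ l ∈ range N, f l := by
  induction s using Int.induction_on with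
  | zero => simp
  | succ s ih =>
    have key := sum_shift_one N (fun t => f (t - s)) (fun k => by beta_reduce; rw [show k + (N:ℤ) - s = (k - s) + N by ring, hf])
    beta_reduce at key
    calc ∑ l ∈ range N, f ((l : ℤ) - (s + 1))
        = ∑ l ∈ range N, f (((l : ℤ) - 1) - s) := by
          apply Finset.sum_congr rfl; intro l _; congr 1; ring
      _ = ∑ l ∈ range N, f ((l : ℤ) - s) := key
      _ = ∑ l ∈ range N, f l := ih
  | pred s ih =>
    have key := sum_shift_one N (fun t => f (t + s + 1)) (fun k => by beta_reduce; rw [show k + (N:ℤ) + s + 1 = (k + s + 1) + N by ring, hf])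
    beta_reduce at key
    calc ∑ l ∈ range N, f ((l : ℤ) - (-(s:ℤ) - 1))
        = ∑ l ∈ range N, f ((l : ℤ) + s + 1) := by
          apply Finset.sum_congr rfl; intro l _; congr 1; ring
      _ = ∑ l ∈ range N, f (((l : ℤ) - 1) + s + 1) := key.symm
      _ = ∑ l ∈ range N, f ((l : ℤ) - (-s)) := by
          apply Finset.sum_congr rfl; intro l _; congr 1; ring
      _ = ∑ l ∈ range N, f l := ih

lemma dft_shift (N : ℕ) (hN : N ≠ 0) (ψ : ℤ → ℂ) (hψ : ∀ k : ℤ, ψ (k + N) = ψ k)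
    (s n : ℤ) :
    (∑ l ∈ range N, ψ ((l : ℤ) - s) * omegaN N ^ (-((l : ℤ) * n)))
      = omegaN N ^ (-(s * n)) * dft N ψ n := by
  have hω : omegaN N ≠ 0 := omegaN_ne_zero N
  have hωN : ∀ t : ℤ, omegaN N ^ (-(((t : ℤ) + N + s) * n)) = omegaN N ^ (-((t + s) * n)) := by
    intro t
    rw [show -(((t : ℤ) + N + s) * n) = -((t + s) * n) + -((N : ℤ) * n) by ring,
      zpow_add₀ hω]
    rw [show -((N : ℤ) * n) = (N : ℤ) * (-n) by ring, zpow_mul, omegaN_zpow_N N hN]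
    simp
  set F : ℤ → ℂ := fun t => ψ t * omegaN N ^ (-((t + s) * n)) with hF
  have hFper : ∀ k : ℤ, F (k + N) = F k := by
    intro k
    simp only [hF]
    rw [hψ, hωN]
  have h1 : ∀ l : ℕ, ψ ((l : ℤ) - s) * omegaN N ^ (-((l : ℤ) * n)) = F ((l : ℤ) - s) := by
    intro l
    simp only [hF]
    congr 2
    ring
  calc (∑ l ∈ range N, ψ ((l : ℤ) - s) * omegaN N ^ (-((l : ℤ) * n)))
      = ∑ l ∈ range N, F ((l : ℤ) - s) := by
        apply Finset.sum_congr rfl; intro l _; exact h1 l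
    _ = ∑ l ∈ range N, F l := sum_shift N F hFper s
    _ = omegaN N ^ (-(s * n)) * dft N ψ n := by
        simp only [hF, dft, Finset.mul_sum]
        apply Finset.sum_congr rfl
        intro l _
        rw [show -(((l : ℤ) + s) * n) = -(s * n) + -((l : ℤ) * n) by ring, zpow_add₀ hω]
        ring

/-- The complementary-wavelet-packet construction commutes with the
filtering recursion: if ψ′[n] = Σ_{k=0}^{N/2^m−1} h[k]·ψ[n−2^m k] for an N/2^m-periodic
filter h, then 𝒦ψ′[n] = Σ_{k=0}^{N/2^m−1} h[k]·(𝒦ψ)[n−2^m k]. -/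
theorem stmt_16 (j m : ℕ) (hj : 3 ≤ j) (hm : 1 ≤ m) (hmj : m ≤ j) (N : ℕ) (hN : N = 2 ^ j)
    (ψ ψ' h : ℤ → ℂ) (hψ : ∀ k : ℤ, ψ (k + N) = ψ k)
    (hh : ∀ k : ℤ, h (k + ((N / 2 ^ m : ℕ) : ℤ)) = h k)
    (hdef : ∀ n : ℤ, ψ' n = ∑ k ∈ Finset.range (N / 2 ^ m), h k * ψ (n - 2 ^ m * (k : ℤ))) :
    ∀ n : ℤ, Kop N ψ' n = ∑ k ∈ Finset.range (N / 2 ^ m), h k * Kop N ψ (n - 2 ^ m * (k : ℤ)) := by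
  intro n
  have hNne : N ≠ 0 := by rw [hN]; positivity
  have hω : omegaN N ≠ 0 := omegaN_ne_zero N
  have hdft : ∀ w : ℤ, dft N ψ' w
      = ∑ k ∈ Finset.range (N / 2 ^ m), h k * (omegaN N ^ (-((2 ^ m * (k : ℤ)) * w)) * dft N ψ w) := by
    intro w
    rw [dft]
    calc ∑ l ∈ Finset.range N, ψ' l * omegaN N ^ (-((l : ℤ) * w))
        = ∑ l ∈ Finset.range N, ∑ k ∈ Finset.range (N / 2 ^ m),
            h k * (ψ ((l : ℤ) - 2 ^ m * (k : ℤ)) * omegaN N ^ (-((l : ℤ) * w))) := by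
          apply Finset.sum_congr rfl
          intro l _
          rw [hdef, Finset.sum_mul]
          apply Finset.sum_congr rfl
          intro k _
          ring
      _ = ∑ k ∈ Finset.range (N / 2 ^ m), h k *
            ∑ l ∈ Finset.range N, ψ ((l : ℤ) - 2 ^ m * (k : ℤ)) * omegaN N ^ (-((l : ℤ) * w)) := by
          rw [Finset.sum_comm]
          apply Finset.sum_congr rfl
          intro k _
          rw [Finset.mul_sum]
      _ = ∑ k ∈ Finset.range (N / 2 ^ m), h k * (omegaN N ^ (-((2 ^ m * (k : ℤ)) * w)) * dft N ψ w) := by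
          apply Finset.sum_congr rfl
          intro k _
          rw [dft_shift N hNne ψ hψ]
  simp only [Kop]
  calc (N : ℂ)⁻¹ * ∑ w ∈ Finset.range N,
        (if w = 0 ∨ 2 * w = N then 1 else if 2 * w < N then -Complex.I else Complex.I) *
          dft N ψ' w * omegaN N ^ (n * (w : ℤ))
      = (N : ℂ)⁻¹ * ∑ w ∈ Finset.range N, ∑ k ∈ Finset.range (N / 2 ^ m),
          h k * ((if w = 0 ∨ 2 * w = N then 1 else if 2 * w < N then -Complex.I else Complex.I) *
            dft N ψ w * omegaN N ^ ((n - 2 ^ m * (k : ℤ)) * (w : ℤ))) := by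
        congr 1
        apply Finset.sum_congr rfl
        intro w _
        rw [hdft w, Finset.mul_sum, Finset.sum_mul]
        apply Finset.sum_congr rfl
        intro k _
        rw [show (n - 2 ^ m * (k : ℤ)) * (w : ℤ) = n * (w : ℤ) + -((2 ^ m * (k : ℤ)) * (w : ℤ)) by ring,
          zpow_add₀ hω]
        ring
    _ = ∑ k ∈ Finset.range (N / 2 ^ m), h k * ((N : ℂ)⁻¹ * ∑ w ∈ Finset.range N,
          (if w = 0 ∨ 2 * w = N then 1 else if 2 * w < N then -Complex.I else Complex.I) *
            dft N ψ w * omegaN N ^ ((n - 2 ^ m * (k : ℤ)) * (w : ℤ))) := by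
        simp only [Finset.mul_sum]
        rw [Finset.sum_comm]
        apply Finset.sum_congr rfl
        intro k _
        apply Finset.sum_congr rfl
        intro w _
        ring
end
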